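/- (Theorem 2.3, first part) Let A(S) be the attractor of an IIFS (f_i)_{i∈I} on a nonempty complete metric space X. Then for every infinite word ω : ℕ → I, the intersection ⋂_{m ≥ 1} closure(f_{ω(0)} ∘ f_{ω(1)} ∘ ⋯ ∘ f_{ω(m-1)}(A(S))) consists of exactly one point a_ω, and for every a ∈ A(S) the sequence m ↦ (f_{ω(0)} ∘ f_{ω(1)} ∘ ⋯ ∘ f_{ω(m-1)})(a) converges to a_ω. -/

import Mathlib

open scoped ENNReal NNReal
open Filter Topology

/-- `iterComp f ω m = f_{ω 0} ∘ f_{ω 1} ∘ ⋯ ∘ f_{ω (m-1)}`. -/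
def iterComp {X : Type*} {I : Type*} (f : I → X → X) (ω : ℕ → I) : ℕ → X → X
  | 0 => id
  | m + 1 => iterComp f ω m ∘ f (ω m)

theorem iterComp_lipschitz {X : Type*} [MetricSpace X] {I : Type*} (f : I → X → X)
    (c : ℝ≥0) (hlip : ∀ i : I, LipschitzWith c (f i)) (ω : ℕ → I) (m : ℕ) :
    LipschitzWith (c ^ m) (iterComp f ω m) := by
  induction m with
  | zero => simpa [iterComp] using LipschitzWith.id
  | succ m ih =>
    have := ih.comp (hlip (ω m))
    simpa [iterComp, pow_succ] using this

/-- Theorem 2.3, first part. For the attractor `Att` of an IIFS and any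
infinite word `ω : ℕ → I`, the set `⋂_{m ≥ 1} closure (f_{[ω]_m} '' Att)` is a singleton
`{aω}`, and for every `a ∈ Att` the sequence `m ↦ f_{[ω]_m} a` converges to `aω`. -/
theorem iifs_word_intersection_singleton {X : Type*} [MetricSpace X] [CompleteSpace X]
    {I : Type*} [Nonempty I] (f : I → X → X) (c : ℝ≥0) (hc : c < 1)
    (hlip : ∀ i : I, LipschitzWith c (f i))
    (hbdd : ∀ B : Set X, Bornology.IsBounded B → Bornology.IsBounded (⋃ i : I, f i '' B))
    (Att : Set X)
    (hAtt : Att.Nonempty ∧ Bornology.IsBounded Att ∧ IsClosed Att ∧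
      closure (⋃ i : I, f i '' Att) = Att)
    (ω : ℕ → I) :
    ∃ aω : X, (⋂ m ∈ Set.Ici 1, closure (iterComp f ω m '' Att)) = {aω} ∧
      ∀ a ∈ Att, Tendsto (fun m : ℕ => iterComp f ω m a) atTop (𝓝 aω) := by
  obtain ⟨⟨a₀, ha₀⟩, hAb, hAcl, hAfix⟩ := hAtt
  set S : ℕ → Set X := fun m => iterComp f ω m '' Att with hS
  -- each f i maps Att into Att
  have hmaps : ∀ i : I, f i '' Att ⊆ Att := by
    intro i
    conv_rhs => rw [← hAfix]
    exact (Set.subset_iUnion (fun i => f i '' Att) i).trans subset_closure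
  -- S is antitone
  have hsucc : ∀ n : ℕ, S (n + 1) ⊆ S n := by
    intro n
    have : S (n + 1) = iterComp f ω n '' (f (ω n) '' Att) := by
      rw [Set.image_image]; rfl
    rw [this]
    exact Set.image_mono (hmaps (ω n))
  have hanti : ∀ m n : ℕ, m ≤ n → S n ⊆ S m := by
    intro m n h
    induction n with
    | zero => simp [Nat.le_zero.mp h]
    | succ n ih =>
      rcases Nat.lt_or_ge m (n + 1) with h' | h'
      · exact (hsucc n).trans (ih (Nat.lt_succ_iff.mp h'))
      · have : m = n + 1 := le_antisymm h h'
        simp [this]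
  -- diameter bound
  have hb : ∀ m : ℕ, ∀ x ∈ S m, ∀ y ∈ S m, dist x y ≤ (c : ℝ) ^ m * Metric.diam Att := by
    rintro m x ⟨a, ha, rfl⟩ y ⟨b, hb', rfl⟩
    calc dist (iterComp f ω m a) (iterComp f ω m b) ≤ (c ^ m : ℝ≥0) * dist a b :=
          (iterComp_lipschitz f c hlip ω m).dist_le_mul a b
      _ ≤ (c : ℝ) ^ m * Metric.diam Att := by
          push_cast
          exact mul_le_mul_of_nonneg_left (Metric.dist_le_diam_of_mem hAb ha hb')
            (by positivity)
  set b : ℕ → ℝ := fun m => (c : ℝ) ^ m * Metric.diam Att with hbdef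
  have hb0 : Tendsto b atTop (𝓝 0) := by
    rw [show (0 : ℝ) = 0 * Metric.diam Att by ring]
    exact (tendsto_pow_atTop_nhds_zero_of_lt_one (by positivity) (by exact_mod_cast hc)).mul_const _
  -- S m bounded, hence closures have the same diam bound
  have hbcl : ∀ m : ℕ, ∀ x ∈ closure (S m), ∀ y ∈ closure (S m), dist x y ≤ b m := by
    intro m x hx y hy
    have hSb : Bornology.IsBounded (S m) :=
      (iterComp_lipschitz f c hlip ω m).isBounded_image hAb
    have hd : Metric.diam (closure (S m)) ≤ b m := by
      rw [Metric.diam_closure]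
      exact Metric.diam_le_of_forall_dist_le (by positivity) (hb m)
    exact (Metric.dist_le_diam_of_mem hSb.closure hx hy).trans hd
  -- the orbit of a₀ is Cauchy
  set x : ℕ → X := fun m => iterComp f ω m a₀ with hx
  have hxmem : ∀ m, x m ∈ S m := fun m => ⟨a₀, ha₀, rfl⟩
  have hcauchy : CauchySeq x := by
    apply cauchySeq_of_le_tendsto_0 b _ hb0
    intro n m N hn hm
    exact hb N (x n) (hanti N n hn (hxmem n)) (x m) (hanti N m hm (hxmem m))
  obtain ⟨aω, haω⟩ := cauchySeq_tendsto_of_complete hcauchy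
  refine ⟨aω, ?_, ?_⟩
  · -- aω belongs to every closure (S m)
    have hmem : ∀ m : ℕ, aω ∈ closure (S m) := by
      intro m
      refine mem_closure_of_tendsto haω ?_
      filter_upwards [eventually_ge_atTop m] with n hn
      exact hanti m n hn (hxmem n)
    ext y
    simp only [Set.mem_iInter, Set.mem_singleton_iff, Set.mem_Ici]
    constructor
    · intro hy
      have hdist : ∀ m : ℕ, 1 ≤ m → dist y aω ≤ b m := fun m hm =>
        hbcl m y (hy m hm) aω (hmem m)
      have : dist y aω ≤ 0 := by
        refine ge_of_tendsto hb0 ?_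
        filter_upwards [eventually_ge_atTop 1] with m hm using hdist m hm
      exact dist_le_zero.mp this
    · rintro rfl m _
      exact hmem m
  · intro a ha
    have hle : ∀ m : ℕ, dist (iterComp f ω m a) aω ≤ b m := by
      intro m
      have hmem : aω ∈ closure (S m) := by
        refine mem_closure_of_tendsto haω ?_
        filter_upwards [eventually_ge_atTop m] with n hn
        exact hanti m n hn (hxmem n)
      exact hbcl m _ (subset_closure ⟨a, ha, rfl⟩) aω hmem
    rw [tendsto_iff_dist_tendsto_zero]
    exact squeeze_zero (fun _ => dist_nonneg) hle hb0
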